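/- For every s > 0 and 0 < x, the sum Σ_{n=1}^∞ (nπ − π/2)^{−1/2} e^{−(nπ−π/2)x} is bounded above both by e^{−πx/2}(√(2/π) + 1/√(πx)) and by √(2/π) · e^{−πx/2}/(1 − e^{−πx}). -/

import Mathlib

open Real MeasureTheory Set

noncomputable def gg (r t : ℝ) : ℝ := t ^ ((1/2 : ℝ) - 1) * Real.exp (-(r * t))

lemma gg_int {r : ℝ} (hr : 0 < r) : IntegrableOn (gg r) (Set.Ioi 0) := by
  have h := integrableOn_rpow_mul_exp_neg_mul_rpow (p := 1) (s := (1/2:ℝ) - 1) (b := r)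
    (by norm_num) one_pos hr
  refine h.congr_fun (fun t ht => ?_) measurableSet_Ioi
  simp [gg, Real.rpow_one, neg_mul]

lemma gg_integral {r : ℝ} (hr : 0 < r) :
    ∫ t in Set.Ioi 0, gg r t = Real.sqrt π / Real.sqrt r := by
  have h := integral_rpow_mul_exp_neg_mul_Ioi (a := (1/2:ℝ)) (r := r) (by norm_num) hr
  simp only [gg]
  rw [h, Real.Gamma_one_half_eq, ← Real.sqrt_eq_rpow, one_div, Real.sqrt_inv,
    ← one_div, div_mul_eq_mul_div, one_mul]

lemma gg_nonneg {r t : ℝ} (ht : 0 ≤ t) : 0 ≤ gg r t := by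
  unfold gg; positivity

lemma gg_anti {r : ℝ} (hr : 0 < r) : AntitoneOn (gg r) (Set.Ici 1) := by
  intro s hs t ht hst
  unfold gg
  have hs1 : (1:ℝ) ≤ s := hs
  have hs0 : (0:ℝ) < s := lt_of_lt_of_le one_pos hs1
  apply mul_le_mul
  · exact Real.rpow_le_rpow_of_nonpos hs0 hst (by norm_num)
  · exact Real.exp_le_exp.2 (neg_le_neg (mul_le_mul_of_nonneg_left hst hr.le))
  · exact (Real.exp_pos _).le
  · positivity

lemma key {r : ℝ} (hr : 0 < r) :
    ∑' n : ℕ, Real.exp (-(((n : ℝ) + 1) * r)) / Real.sqrt ((n : ℝ) + 1)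
      ≤ Real.sqrt π / Real.sqrt r := by
  set F : ℕ → ℝ := fun n => Real.exp (-(((n : ℝ) + 1) * r)) / Real.sqrt ((n : ℝ) + 1) with hF
  have hFnn : ∀ n, 0 ≤ F n := fun n => by unfold F; positivity
  apply Real.tsum_le_of_sum_range_le hFnn
  intro N
  -- integral pieces
  have hint := gg_int hr
  have hIoc : IntegrableOn (gg r) (Set.Ioc 0 1) := hint.mono_set Ioc_subset_Ioi_self
  have hIoi1 : IntegrableOn (gg r) (Set.Ioi 1) := hint.mono_set (Ioi_subset_Ioi zero_le_one)
  have hsplit : (∫ t in Set.Ioc 0 1, gg r t) + (∫ t in Set.Ioi 1, gg r t)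
      = Real.sqrt π / Real.sqrt r := by
    rw [← gg_integral hr, ← setIntegral_union (Ioc_disjoint_Ioi le_rfl) measurableSet_Ioi
      hIoc hIoi1, Ioc_union_Ioi_eq_Ioi zero_le_one]
  -- first term
  have h0 : F 0 ≤ ∫ t in Set.Ioc 0 1, gg r t := by
    have : F 0 = Real.exp (-r) := by simp [hF]
    rw [this]
    have hconst : (∫ _ in Set.Ioc (0:ℝ) 1, Real.exp (-r)) = Real.exp (-r) := by
      simp [Real.volume_Ioc]
    rw [← hconst]
    apply setIntegral_mono_on (by apply integrableOn_const (by simp [Real.volume_Ioc])) hIoc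
      measurableSet_Ioc
    intro t ht
    unfold gg
    have h1 : Real.exp (-r) ≤ Real.exp (-(r * t)) := by
      apply Real.exp_le_exp.2
      nlinarith [ht.1, ht.2, hr]
    have h2 : (1:ℝ) ≤ t ^ ((1/2 : ℝ) - 1) :=
      Real.one_le_rpow_of_pos_of_le_one_of_nonpos ht.1 ht.2 (by norm_num)
    calc Real.exp (-r) = 1 * Real.exp (-r) := by ring
    _ ≤ t ^ ((1/2 : ℝ) - 1) * Real.exp (-(r * t)) :=
        mul_le_mul h2 h1 (Real.exp_pos _).le (by positivity)
  -- rest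
  rcases Nat.eq_zero_or_pos N with hN | hN
  · subst hN
    simp only [Finset.range_zero, Finset.sum_empty]
    rw [← hsplit]
    have h1 : 0 ≤ ∫ t in Set.Ioc (0:ℝ) 1, gg r t :=
      setIntegral_nonneg measurableSet_Ioc fun t ht => gg_nonneg ht.1.le
    have h2 : 0 ≤ ∫ t in Set.Ioi (1:ℝ), gg r t :=
      setIntegral_nonneg measurableSet_Ioi fun t ht => gg_nonneg (by linarith [mem_Ioi.1 ht])
    linarith
  obtain ⟨M, rfl⟩ : ∃ M, N = M + 1 := ⟨N - 1, (Nat.succ_pred_eq_of_pos hN).symm⟩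
  rw [Finset.sum_range_succ']
  have hrest : ∑ i ∈ Finset.range M, F (i + 1) ≤ ∫ t in Set.Ioi 1, gg r t := by
    have hanti : AntitoneOn (gg r) (Set.Icc (1:ℝ) (1 + M)) :=
      (gg_anti hr).mono (Icc_subset_Ici_self)
    have := hanti.sum_le_integral
    have heq : ∀ i ∈ Finset.range M, F (i + 1) = gg r (1 + ((i:ℕ) + 1 : ℕ)) := by
      intro i _
      unfold gg
      have ht : (0:ℝ) ≤ (1 + ((i:ℕ) + 1 : ℕ) : ℝ) := by positivity
      rw [show ((1/2:ℝ) - 1) = -(1/2 : ℝ) by norm_num, Real.rpow_neg ht,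
        ← Real.sqrt_eq_rpow]
      rw [hF]
      push_cast
      rw [div_eq_mul_inv, mul_comm]
      ring_nf
    rw [Finset.sum_congr rfl heq]
    calc ∑ i ∈ Finset.range M, gg r (1 + ((i:ℕ) + 1 : ℕ)) ≤ ∫ t in (1:ℝ)..(1 + M), gg r t :=
          this
    _ = ∫ t in Set.Ioc (1:ℝ) (1 + M), gg r t := by
        rw [intervalIntegral.integral_of_le (le_add_of_nonneg_right (Nat.cast_nonneg M))]
    _ ≤ ∫ t in Set.Ioi 1, gg r t := by
        apply setIntegral_mono_set hIoi1
        · rw [Filter.EventuallyLE, ae_restrict_iff' measurableSet_Ioi]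
          filter_upwards with t ht using gg_nonneg (by simp at ht ⊢; linarith)
        · exact HasSubset.Subset.eventuallyLE Ioc_subset_Ioi_self
  rw [← hsplit]
  linarith

lemma F_summable {r : ℝ} (hr : 0 < r) :
    Summable (fun n : ℕ => Real.exp (-(((n : ℝ) + 1) * r)) / Real.sqrt ((n : ℝ) + 1)) := by
  have hq1 : Real.exp (-r) < 1 := Real.exp_lt_one_iff.2 (by linarith)
  apply Summable.of_nonneg_of_le (fun n => by positivity)
    (fun n => ?_) ((summable_geometric_of_lt_one (Real.exp_nonneg _) hq1).mul_left (Real.exp (-r)))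
  have h1 : Real.exp (-(((n : ℝ) + 1) * r)) = Real.exp (-r) * Real.exp (-r) ^ n := by
    rw [← Real.exp_nat_mul, ← Real.exp_add]
    ring_nf
  have h2 : (1:ℝ) ≤ Real.sqrt ((n : ℝ) + 1) := by
    have := Real.sqrt_le_sqrt (show (1:ℝ) ≤ (n:ℝ)+1 by linarith [Nat.cast_nonneg (α := ℝ) n])
    simpa using this
  calc Real.exp (-(((n : ℝ) + 1) * r)) / Real.sqrt ((n : ℝ) + 1)
      ≤ Real.exp (-(((n : ℝ) + 1) * r)) / 1 :=
        div_le_div_of_nonneg_left (Real.exp_nonneg _) one_pos h2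
    _ = Real.exp (-r) * Real.exp (-r) ^ n := by rw [div_one, h1]


/-- for x > 0, Σ_{n≥1} (nπ − π/2)^{−1/2} e^{−(nπ−π/2)x} is bounded by
e^{−πx/2}(√(2/π) + 1/√(πx)) and by √(2/π)·e^{−πx/2}/(1 − e^{−πx}). -/
theorem stmt10 (x : ℝ) (hx : 0 < x) :
    (∑' n : ℕ, Real.exp (-((((n : ℝ) + 1) * π - π / 2) * x)) /
          Real.sqrt (((n : ℝ) + 1) * π - π / 2) ≤
        Real.exp (-(π * x) / 2) * (Real.sqrt (2 / π) + 1 / Real.sqrt (π * x))) ∧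
      ∑' n : ℕ, Real.exp (-((((n : ℝ) + 1) * π - π / 2) * x)) /
          Real.sqrt (((n : ℝ) + 1) * π - π / 2) ≤
        Real.sqrt (2 / π) * (Real.exp (-(π * x) / 2) / (1 - Real.exp (-(π * x)))) := by
  have hπ := Real.pi_pos
  have hr : 0 < π * x := by positivity
  set f : ℕ → ℝ := fun n => Real.exp (-((((n : ℝ) + 1) * π - π / 2) * x)) /
      Real.sqrt (((n : ℝ) + 1) * π - π / 2) with hf
  have hc : ∀ n : ℕ, ((n : ℝ) + 1) * π - π / 2 = π / 2 + n * π := fun n => by ring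
  have hcpos : ∀ n : ℕ, 0 < ((n : ℝ) + 1) * π - π / 2 := fun n => by
    rw [hc]; positivity
  set q : ℝ := Real.exp (-(π * x)) with hq
  have hq0 : 0 ≤ q := Real.exp_nonneg _
  have hq1 : q < 1 := Real.exp_lt_one_iff.2 (by linarith)
  have hgeo : ∀ n : ℕ, f n ≤ Real.sqrt (2 / π) * Real.exp (-(π * x) / 2) * q ^ n := by
    intro n
    have hexp : Real.exp (-((((n : ℝ) + 1) * π - π / 2) * x))
        = Real.exp (-(π * x) / 2) * q ^ n := by
      rw [hq, ← Real.exp_nat_mul, ← Real.exp_add]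
      ring_nf
    have hsq : Real.sqrt (π / 2) ≤ Real.sqrt (((n : ℝ) + 1) * π - π / 2) := by
      apply Real.sqrt_le_sqrt
      rw [hc]
      nlinarith [Nat.cast_nonneg (α := ℝ) n]
    have hsqpos : 0 < Real.sqrt (π / 2) := Real.sqrt_pos.2 (by positivity)
    have hinv : 1 / Real.sqrt (((n : ℝ) + 1) * π - π / 2) ≤ Real.sqrt (2 / π) := by
      rw [show Real.sqrt (2 / π) = 1 / Real.sqrt (π / 2) by
        rw [eq_div_iff hsqpos.ne', ← Real.sqrt_mul (by positivity)]
        rw [show 2 / π * (π / 2) = 1 by field_simp]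
        exact Real.sqrt_one]
      exact one_div_le_one_div_of_le hsqpos hsq
    calc f n = Real.exp (-((((n : ℝ) + 1) * π - π / 2) * x)) *
          (1 / Real.sqrt (((n : ℝ) + 1) * π - π / 2)) := by rw [hf]; ring
      _ ≤ Real.exp (-((((n : ℝ) + 1) * π - π / 2) * x)) * Real.sqrt (2 / π) :=
          mul_le_mul_of_nonneg_left hinv (Real.exp_nonneg _)
      _ = Real.sqrt (2 / π) * Real.exp (-(π * x) / 2) * q ^ n := by rw [hexp]; ring
  have hgsum : Summable (fun n : ℕ => Real.sqrt (2 / π) * Real.exp (-(π * x) / 2) * q ^ n) :=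
    (summable_geometric_of_lt_one hq0 hq1).mul_left _
  have hsum : Summable f :=
    Summable.of_nonneg_of_le (fun n => by rw [hf]; positivity) hgeo hgsum
  constructor
  · -- first bound
    rw [Summable.tsum_eq_zero_add hsum]
    have hf0 : f 0 = Real.exp (-(π * x) / 2) * Real.sqrt (2 / π) := by
      rw [hf]
      simp only [Nat.cast_zero]
      rw [show ((0:ℝ) + 1) * π - π / 2 = π / 2 by ring]
      have hsqpos : 0 < Real.sqrt (π / 2) := Real.sqrt_pos.2 (by positivity)
      rw [show Real.exp (-(π / 2 * x)) = Real.exp (-(π * x) / 2) by ring_nf]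
      rw [div_eq_iff hsqpos.ne']
      rw [mul_assoc, ← Real.sqrt_mul (by positivity)]
      rw [show 2 / π * (π / 2) = 1 by field_simp]
      simp
    have hsπ : 0 < Real.sqrt π := Real.sqrt_pos.2 hπ
    have hrest : ∑' m : ℕ, f (m + 1) ≤ Real.exp (-(π * x) / 2) * (1 / Real.sqrt (π * x)) := by
      have hterm : ∀ m : ℕ, f (m + 1) ≤ (Real.exp (-(π * x) / 2) / Real.sqrt π) *
          (Real.exp (-(((m : ℝ) + 1) * (π * x))) / Real.sqrt ((m : ℝ) + 1)) := by
        intro m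
        have hexp : Real.exp (-(((((m + 1 : ℕ) : ℝ) + 1) * π - π / 2) * x))
            = Real.exp (-(π * x) / 2) * Real.exp (-(((m : ℝ) + 1) * (π * x))) := by
          rw [← Real.exp_add]
          push_cast
          ring_nf
        have hden : Real.sqrt ((m : ℝ) + 1) * Real.sqrt π ≤
            Real.sqrt ((((m + 1 : ℕ) : ℝ) + 1) * π - π / 2) := by
          rw [← Real.sqrt_mul (by positivity)]
          apply Real.sqrt_le_sqrt
          push_cast
          nlinarith [Nat.cast_nonneg (α := ℝ) m]
        have hdpos : 0 < Real.sqrt ((m : ℝ) + 1) * Real.sqrt π := by positivity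
        simp only [hf]
        calc Real.exp (-(((((m + 1 : ℕ) : ℝ) + 1) * π - π / 2) * x)) /
              Real.sqrt ((((m + 1 : ℕ) : ℝ) + 1) * π - π / 2)
            ≤ Real.exp (-(((((m + 1 : ℕ) : ℝ) + 1) * π - π / 2) * x)) /
              (Real.sqrt ((m : ℝ) + 1) * Real.sqrt π) :=
              div_le_div_of_nonneg_left (Real.exp_nonneg _) hdpos hden
          _ = (Real.exp (-(π * x) / 2) / Real.sqrt π) *
              (Real.exp (-(((m : ℝ) + 1) * (π * x))) / Real.sqrt ((m : ℝ) + 1)) := by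
              rw [hexp]; field_simp
      have hFsum := F_summable hr
      have hsum' : Summable (fun m : ℕ => f (m + 1)) := by
        exact_mod_cast hsum.comp_injective (add_left_injective 1)
      calc ∑' m : ℕ, f (m + 1)
          ≤ ∑' m : ℕ, (Real.exp (-(π * x) / 2) / Real.sqrt π) *
            (Real.exp (-(((m : ℝ) + 1) * (π * x))) / Real.sqrt ((m : ℝ) + 1)) :=
            Summable.tsum_le_tsum hterm hsum' (hFsum.mul_left _)
        _ = (Real.exp (-(π * x) / 2) / Real.sqrt π) *
            ∑' m : ℕ, Real.exp (-(((m : ℝ) + 1) * (π * x))) / Real.sqrt ((m : ℝ) + 1) :=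
            tsum_mul_left
        _ ≤ (Real.exp (-(π * x) / 2) / Real.sqrt π) * (Real.sqrt π / Real.sqrt (π * x)) := by
            apply mul_le_mul_of_nonneg_left (key hr) (by positivity)
        _ = Real.exp (-(π * x) / 2) * (1 / Real.sqrt (π * x)) := by
            field_simp
    calc f 0 + ∑' m : ℕ, f (m + 1)
        ≤ Real.exp (-(π * x) / 2) * Real.sqrt (2 / π) +
          Real.exp (-(π * x) / 2) * (1 / Real.sqrt (π * x)) := by
          rw [hf0]; linarith
      _ = Real.exp (-(π * x) / 2) * (Real.sqrt (2 / π) + 1 / Real.sqrt (π * x)) := by ring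
  · -- second bound
    calc ∑' n : ℕ, f n ≤ ∑' n : ℕ, Real.sqrt (2 / π) * Real.exp (-(π * x) / 2) * q ^ n :=
          Summable.tsum_le_tsum hgeo hsum hgsum
      _ = Real.sqrt (2 / π) * Real.exp (-(π * x) / 2) * (1 - q)⁻¹ := by
          rw [tsum_mul_left, tsum_geometric_of_lt_one hq0 hq1]
      _ = Real.sqrt (2 / π) * (Real.exp (-(π * x) / 2) / (1 - q)) := by
          rw [div_eq_mul_inv]; ring
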